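/- Let M ∈ ℝ^{s×s} be symmetric positive definite, A ∈ ℝ^{s×s}, ε > 0, and 0 ≤ γ ≤ ε. Then ‖Ax‖_M ≤ ε − γ holds for every x ∈ ℝ^s with ‖x‖_M ≤ ε if and only if there exists κ with 0 ≤ κ ≤ (ε − γ)²/ε² such that Aᵀ M A ⪯ κM. -/

import Mathlib

open Matrix

private lemma quad_form_eq {s : ℕ} (M A : Matrix (Fin s) (Fin s) ℝ) (κ : ℝ)
    (x : Fin s → ℝ) :
    x ⬝ᵥ ((κ • M - Aᵀ * M * A) *ᵥ x)
      = κ * (x ⬝ᵥ (M *ᵥ x)) - (A *ᵥ x) ⬝ᵥ (M *ᵥ (A *ᵥ x)) := by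
  have key : x ⬝ᵥ (Aᵀ *ᵥ (M *ᵥ (A *ᵥ x))) = (A *ᵥ x) ⬝ᵥ (M *ᵥ (A *ᵥ x)) := by
    rw [Matrix.dotProduct_mulVec, Matrix.vecMul_transpose]
  rw [Matrix.sub_mulVec, dotProduct_sub, Matrix.smul_mulVec,
    dotProduct_smul, smul_eq_mul, ← Matrix.mulVec_mulVec, ← Matrix.mulVec_mulVec, key]

/-- **S-procedure step.** For a symmetric positive definite `M`, `ε > 0`, and
`0 ≤ γ ≤ ε`, one has `‖A x‖_M ≤ ε − γ` for every `x` with `‖x‖_M ≤ ε` if and only if there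
exists `κ` with `0 ≤ κ ≤ (ε − γ)²/ε²` such that `Aᵀ M A ⪯ κ M`. -/
theorem weighted_norm_bound_iff_matrix_ineq
    {s : ℕ} (M A : Matrix (Fin s) (Fin s) ℝ) (hM : M.PosDef)
    (ε γ : ℝ) (hε : 0 < ε) (hγ : 0 ≤ γ) (hγε : γ ≤ ε) :
    (∀ x : Fin s → ℝ, Real.sqrt (x ⬝ᵥ (M *ᵥ x)) ≤ ε →
        Real.sqrt ((A *ᵥ x) ⬝ᵥ (M *ᵥ (A *ᵥ x))) ≤ ε - γ) ↔
    (∃ κ : ℝ, 0 ≤ κ ∧ κ ≤ (ε - γ) ^ 2 / ε ^ 2 ∧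
        (κ • M - Aᵀ * M * A).PosSemidef) := by
  have hεγ : 0 ≤ ε - γ := by linarith
  constructor
  · intro h
    refine ⟨(ε - γ) ^ 2 / ε ^ 2, by positivity, le_refl _, posSemidef_iff_dotProduct_mulVec.mpr ⟨?_, ?_⟩⟩
    · have hH : (Aᵀ * M * A).IsHermitian := by
        have h1 := Matrix.isHermitian_conjTranspose_mul_mul A hM.1
        rwa [Matrix.conjTranspose_eq_transpose_of_trivial] at h1
      have hS : (((ε - γ) ^ 2 / ε ^ 2) • M).IsHermitian := by
        unfold Matrix.IsHermitian
        rw [Matrix.conjTranspose_smul, hM.1]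
        simp
      exact hS.sub hH
    · intro x
      simp only [RCLike.star_def, star_trivial]
      rw [quad_form_eq]
      by_cases hx : x = 0
      · simp [hx]
      · have hq : 0 < x ⬝ᵥ (M *ᵥ x) := by
          have := hM.dotProduct_mulVec_pos hx
          simpa using this
        set c : ℝ := ε / Real.sqrt (x ⬝ᵥ (M *ᵥ x)) with hc
        have hsq : 0 < Real.sqrt (x ⬝ᵥ (M *ᵥ x)) := Real.sqrt_pos.mpr hq
        have hcpos : 0 < c := div_pos hε hsq
        have hy : Real.sqrt ((c • x) ⬝ᵥ (M *ᵥ (c • x))) = ε := by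
          rw [Matrix.mulVec_smul, dotProduct_smul, smul_dotProduct,
            smul_eq_mul, smul_eq_mul, ← mul_assoc, Real.sqrt_mul (by positivity),
            Real.sqrt_mul_self hcpos.le, hc]
          field_simp
        have h2 := h (c • x) (le_of_eq hy)
        have h3 : (A *ᵥ (c • x)) ⬝ᵥ (M *ᵥ (A *ᵥ (c • x))) ≤ (ε - γ) ^ 2 := by
          have hnn : 0 ≤ (A *ᵥ (c • x)) ⬝ᵥ (M *ᵥ (A *ᵥ (c • x))) := by
            have := hM.posSemidef.dotProduct_mulVec_nonneg (A *ᵥ (c • x))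
            simpa using this
          nlinarith [Real.sq_sqrt hnn, Real.sqrt_nonneg ((A *ᵥ (c • x)) ⬝ᵥ (M *ᵥ (A *ᵥ (c • x))))]
        have h4 : (A *ᵥ (c • x)) ⬝ᵥ (M *ᵥ (A *ᵥ (c • x)))
            = c ^ 2 * ((A *ᵥ x) ⬝ᵥ (M *ᵥ (A *ᵥ x))) := by
          rw [Matrix.mulVec_smul, Matrix.mulVec_smul, dotProduct_smul,
            smul_dotProduct]
          ring_nf
        have hc2 : c ^ 2 * (x ⬝ᵥ (M *ᵥ x)) = ε ^ 2 := by
          rw [hc, div_pow, Real.sq_sqrt hq.le]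
          field_simp
        rw [h4] at h3
        have hA : (A *ᵥ x) ⬝ᵥ (M *ᵥ (A *ᵥ x)) ≤ (ε - γ) ^ 2 / c ^ 2 := by
          rw [le_div_iff₀ (by positivity)]
          linarith [h3]
        have : (ε - γ) ^ 2 / c ^ 2 = (ε - γ) ^ 2 / ε ^ 2 * (x ⬝ᵥ (M *ᵥ x)) := by
          rw [← hc2]; field_simp
        rw [this] at hA
        linarith
  · rintro ⟨κ, hκ0, hκle, hpsd⟩
    intro x hx
    have hq := hpsd.dotProduct_mulVec_nonneg x
    simp only [RCLike.star_def, star_trivial] at hq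
    rw [quad_form_eq] at hq
    have hxq : 0 ≤ x ⬝ᵥ (M *ᵥ x) := by simpa using hM.posSemidef.dotProduct_mulVec_nonneg x
    have hx2 : x ⬝ᵥ (M *ᵥ x) ≤ ε ^ 2 := by
      nlinarith [Real.sq_sqrt hxq, Real.sqrt_nonneg (x ⬝ᵥ (M *ᵥ x))]
    have hb : (A *ᵥ x) ⬝ᵥ (M *ᵥ (A *ᵥ x)) ≤ (ε - γ) ^ 2 := by
      have h1 : (A *ᵥ x) ⬝ᵥ (M *ᵥ (A *ᵥ x)) ≤ κ * (x ⬝ᵥ (M *ᵥ x)) := by linarith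
      have h2 : κ * (x ⬝ᵥ (M *ᵥ x)) ≤ κ * ε ^ 2 := by nlinarith
      have h3 : κ * ε ^ 2 ≤ (ε - γ) ^ 2 := by
        have := (le_div_iff₀ (show (0:ℝ) < ε ^ 2 by positivity)).mp hκle
        linarith
      linarith
    calc Real.sqrt ((A *ᵥ x) ⬝ᵥ (M *ᵥ (A *ᵥ x)))
        ≤ Real.sqrt ((ε - γ) ^ 2) := Real.sqrt_le_sqrt hb
      _ = ε - γ := by rw [Real.sqrt_sq hεγ]
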